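/- Let I ≥ 2 and let Y := {y ∈ ℝ^I : ∑_i y_i = 0 and −F_l ≤ ∑_i π_{il} y_i ≤ F_l for all l} with F_l ≥ 0, and let P_Y denote Euclidean projection onto Y. Then for every index i and every fixed vector of other components b_{−i} ∈ ℝ^{I−1}, there exists b_i ∈ ℝ such that, writing b = (b_i, b_{−i}), the projection satisfies (P_Y(b))_i = 0; that is, prosumer i can always choose a bid for which its cleared quantity in the sharing market is zero. -/
import Mathlib


open Finset

noncomputable section

/-- Feasible set of cleared quantities: balance plus line flow limits. -/
def Ysh (I L : ℕ) (ptdf : Fin I → Fin L → ℝ) (F : Fin L → ℝ) : Set (Fin I → ℝ) :=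
  {y | ∑ i, y i = 0 ∧ ∀ l, |∑ i, ptdf i l * y i| ≤ F l}

/-- `y` is the Euclidean projection of `b` onto `Ysh I L ptdf F`. -/
def IsProj (I L : ℕ) (ptdf : Fin I → Fin L → ℝ) (F : Fin L → ℝ)
    (b y : Fin I → ℝ) : Prop :=
  y ∈ Ysh I L ptdf F ∧
    ∀ z ∈ Ysh I L ptdf F, ∑ i, (b i - y i) ^ 2 ≤ ∑ i, (b i - z i) ^ 2

namespace Stmt4Aux

variable {I L : ℕ} {ptdf : Fin I → Fin L → ℝ} {F : Fin L → ℝ}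

lemma abs_sub' (a b : ℝ) : |a - b| ≤ |a| + |b| := by
  have h := abs_add_le a (-b)
  rwa [abs_neg, ← sub_eq_add_neg] at h

lemma zero_mem (hF : ∀ l, 0 ≤ F l) : (fun _ => (0:ℝ)) ∈ Ysh I L ptdf F := by
  constructor
  · simp
  · intro l; simpa using hF l

lemma neg_mem {z : Fin I → ℝ} (hz : z ∈ Ysh I L ptdf F) :
    (fun j => -z j) ∈ Ysh I L ptdf F := by
  obtain ⟨h1, h2⟩ := hz
  constructor
  · simp [h1]
  · intro l
    have h := h2 l
    have e : ∑ j, ptdf j l * (-z j) = -(∑ j, ptdf j l * z j) := by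
      rw [← Finset.sum_neg_distrib]
      exact Finset.sum_congr rfl fun j _ => by ring
    simpa [e, abs_neg] using h

/-- Variational inequality for the projection. -/
lemma vi {b y : Fin I → ℝ} (h : IsProj I L ptdf F b y) {z : Fin I → ℝ}
    (hz : z ∈ Ysh I L ptdf F) :
    ∑ j, (b j - y j) * (z j - y j) ≤ 0 := by
  obtain ⟨⟨hy1, hy2⟩, hmin⟩ := h
  obtain ⟨hz1, hz2⟩ := hz
  set S := ∑ j, (b j - y j) * (z j - y j) with hS
  set Q := ∑ j, (z j - y j) ^ 2 with hQ
  have hQ0 : 0 ≤ Q := Finset.sum_nonneg fun j _ => sq_nonneg _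
  have key : ∀ ε : ℝ, 0 < ε → ε ≤ 1 → 2 * S ≤ ε * Q := by
    intro ε hε0 hε1
    have hw : (fun j => y j + ε * (z j - y j)) ∈ Ysh I L ptdf F := by
      constructor
      · have e : ∑ j, (y j + ε * (z j - y j)) = ∑ j, y j + ε * (∑ j, z j - ∑ j, y j) := by
          rw [Finset.sum_add_distrib, ← Finset.mul_sum, Finset.sum_sub_distrib]
        show ∑ j, (y j + ε * (z j - y j)) = 0
        rw [e, hy1, hz1]; ring
      · intro l
        have e : ∑ j, ptdf j l * (y j + ε * (z j - y j))
            = (1 - ε) * (∑ j, ptdf j l * y j) + ε * (∑ j, ptdf j l * z j) := by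
          rw [Finset.mul_sum, Finset.mul_sum, ← Finset.sum_add_distrib]
          exact Finset.sum_congr rfl fun j _ => by ring
        show |∑ j, ptdf j l * (y j + ε * (z j - y j))| ≤ F l
        rw [e]
        calc |(1 - ε) * (∑ j, ptdf j l * y j) + ε * (∑ j, ptdf j l * z j)|
            ≤ |(1 - ε) * (∑ j, ptdf j l * y j)| + |ε * (∑ j, ptdf j l * z j)| :=
              abs_add_le _ _
          _ = (1 - ε) * |∑ j, ptdf j l * y j| + ε * |∑ j, ptdf j l * z j| := by
              rw [abs_mul, abs_mul, abs_of_nonneg (by linarith : (0:ℝ) ≤ 1 - ε),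
                abs_of_nonneg hε0.le]
          _ ≤ (1 - ε) * F l + ε * F l := by
              have h1 := hy2 l
              have h2 := hz2 l
              have hA : (0:ℝ) ≤ 1 - ε := by linarith
              nlinarith
          _ = F l := by ring
    have hmle := hmin _ hw
    have e1 : ∀ j : Fin I, (b j - (y j + ε * (z j - y j))) ^ 2
        = (b j - y j) ^ 2 - 2 * ε * ((b j - y j) * (z j - y j))
          + ε ^ 2 * (z j - y j) ^ 2 := fun j => by ring
    have e2 : ∑ j, (b j - (y j + ε * (z j - y j))) ^ 2
        = ∑ j, (b j - y j) ^ 2 - 2 * ε * S + ε ^ 2 * Q := by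
      rw [Finset.sum_congr rfl fun j _ => e1 j, Finset.sum_add_distrib,
        Finset.sum_sub_distrib, ← Finset.mul_sum, ← Finset.mul_sum, hS, hQ]
    rw [e2] at hmle
    nlinarith
  by_contra hSpos
  push_neg at hSpos
  rcases eq_or_lt_of_le hQ0 with hQe | hQp
  · have := key 1 one_pos le_rfl
    rw [← hQe] at this
    linarith
  · have hε : 0 < min 1 (S / Q) := lt_min one_pos (div_pos hSpos hQp)
    have hk := key _ hε (min_le_left _ _)
    have h2 : min 1 (S / Q) * Q ≤ S := by
      calc min 1 (S / Q) * Q ≤ (S / Q) * Q := by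
            exact mul_le_mul_of_nonneg_right (min_le_right _ _) hQp.le
        _ = S := div_mul_cancel₀ _ hQp.ne'
    linarith


/-- With a sufficiently negative own bid, prosumer `i`'s cleared quantity is nonpositive,
provided some feasible point has negative `i`-th coordinate. -/
lemma exists_nonpos (hF : ∀ l, 0 ≤ F l) (P : (Fin I → ℝ) → (Fin I → ℝ))
    (hP : ∀ b, IsProj I L ptdf F b (P b)) (i : Fin I) (b : Fin I → ℝ)
    {w : Fin I → ℝ} (hw : w ∈ Ysh I L ptdf F) (hwi : w i < 0) :
    ∃ t : ℝ, t ≤ 0 ∧ P (Function.update b i t) i ≤ 0 := by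
  set B := ∑ j, (b j) ^ 2 with hB
  have hB0 : 0 ≤ B := Finset.sum_nonneg fun j _ => sq_nonneg _
  set R := Real.sqrt ((4 / 3) * B) with hR
  have hR0 : 0 ≤ R := Real.sqrt_nonneg _
  set c := -w i with hc
  have hc0 : 0 < c := by simp [hc]; linarith
  set D := ∑ j ∈ Finset.univ.erase i, (|b j| + R) * (|w j| + R) with hD
  have hD0 : 0 ≤ D :=
    Finset.sum_nonneg fun j _ => mul_nonneg (by positivity) (by positivity)
  set t := -((D + 1) / c + 1) with ht
  have ht0 : t ≤ 0 := by
    have : 0 ≤ (D + 1) / c := div_nonneg (by linarith) hc0.le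
    simp [ht]; linarith
  refine ⟨t, ht0, ?_⟩
  by_contra hpos
  push_neg at hpos
  set bt := Function.update b i t with hbt
  set y := P bt with hy
  -- norm bound on y
  have vi0 := vi (hP bt) (zero_mem hF)
  have h1 : ∑ j, (y j) ^ 2 ≤ ∑ j, bt j * y j := by
    have e : ∀ j : Fin I, (bt j - y j) * ((fun _ => (0:ℝ)) j - y j)
        = (y j) ^ 2 - bt j * y j := fun j => by show (bt j - y j) * (0 - y j) = _; ring
    rw [Finset.sum_congr rfl fun j _ => e j, Finset.sum_sub_distrib] at vi0
    linarith
  have h2 : ∑ j, bt j * y j ≤ B + (1 / 4) * ∑ j, (y j) ^ 2 := by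
    have e : ∑ j, bt j * y j = t * y i + ∑ j ∈ Finset.univ.erase i, b j * y j := by
      rw [← Finset.add_sum_erase _ _ (Finset.mem_univ i)]
      congr 1
      · simp [hbt]
      · exact Finset.sum_congr rfl fun j hj => by
          rw [hbt, Function.update_of_ne (Finset.ne_of_mem_erase hj)]
    rw [e]
    have hty : t * y i ≤ 0 := mul_nonpos_of_nonpos_of_nonneg ht0 hpos.le
    have h3 : ∑ j ∈ Finset.univ.erase i, b j * y j
        ≤ ∑ j ∈ Finset.univ.erase i, ((b j) ^ 2 + (1 / 4) * (y j) ^ 2) :=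
      Finset.sum_le_sum fun j _ => by nlinarith [sq_nonneg (b j - y j / 2)]
    have h4 : ∑ j ∈ Finset.univ.erase i, ((b j) ^ 2 + (1 / 4) * (y j) ^ 2)
        ≤ B + (1 / 4) * ∑ j, (y j) ^ 2 := by
      rw [Finset.sum_add_distrib]
      have hb' : ∑ j ∈ Finset.univ.erase i, (b j) ^ 2 ≤ B :=
        Finset.sum_le_sum_of_subset_of_nonneg (Finset.subset_univ _)
          (fun j _ _ => sq_nonneg _)
      have hy' : ∑ j ∈ Finset.univ.erase i, (y j) ^ 2 ≤ ∑ j, (y j) ^ 2 :=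
        Finset.sum_le_sum_of_subset_of_nonneg (Finset.subset_univ _)
          (fun j _ _ => sq_nonneg _)
      rw [← Finset.mul_sum]
      linarith
    calc t * y i + ∑ j ∈ Finset.univ.erase i, b j * y j
        ≤ 0 + ∑ j ∈ Finset.univ.erase i, ((b j) ^ 2 + (1 / 4) * (y j) ^ 2) :=
          add_le_add hty h3
      _ ≤ B + (1 / 4) * ∑ j, (y j) ^ 2 := by rw [zero_add]; exact h4
  have hM : ∑ j, (y j) ^ 2 ≤ (4 / 3) * B := by linarith
  have hyb : ∀ j, |y j| ≤ R := by
    intro j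
    rw [← Real.sqrt_sq_eq_abs]
    apply Real.sqrt_le_sqrt
    have h5 : (y j) ^ 2 ≤ ∑ k : Fin I, (y k) ^ 2 :=
      Finset.single_le_sum (fun k _ => sq_nonneg (y k)) (Finset.mem_univ j)
    linarith
  -- final contradiction from VI with w
  have viw := vi (hP bt) hw
  have split : ∑ j, (bt j - y j) * (w j - y j)
      = (t - y i) * (w i - y i)
        + ∑ j ∈ Finset.univ.erase i, (b j - y j) * (w j - y j) := by
    rw [← Finset.add_sum_erase _ _ (Finset.mem_univ i)]
    congr 1
    · simp [hbt]
    · exact Finset.sum_congr rfl fun j hj => by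
        rw [hbt, Function.update_of_ne (Finset.ne_of_mem_erase hj)]
  have tceq : (-t) * c = D + 1 + c := by
    rw [ht, neg_neg, add_mul, div_mul_cancel₀ _ hc0.ne', one_mul]
  have lower1 : D + 1 + c ≤ (t - y i) * (w i - y i) := by
    have ha : -t ≤ -(t - y i) := by linarith
    have hb2 : c ≤ -(w i - y i) := by simp [hc]; linarith
    have : (-t) * c ≤ (-(t - y i)) * (-(w i - y i)) := by
      apply mul_le_mul ha hb2 hc0.le (by linarith [ht0, hpos.le] : (0:ℝ) ≤ -(t - y i))
    rw [tceq] at this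
    nlinarith [this]
  have lower2 : -D ≤ ∑ j ∈ Finset.univ.erase i, (b j - y j) * (w j - y j) := by
    have hterm : ∀ j ∈ Finset.univ.erase i,
        -((|b j| + R) * (|w j| + R)) ≤ (b j - y j) * (w j - y j) := by
      intro j _
      have h1' : |b j - y j| ≤ |b j| + R := (abs_sub' _ _).trans (by linarith [hyb j])
      have h2' : |w j - y j| ≤ |w j| + R := (abs_sub' _ _).trans (by linarith [hyb j])
      have h3' : |(b j - y j) * (w j - y j)| ≤ (|b j| + R) * (|w j| + R) := by
        rw [abs_mul]
        exact mul_le_mul h1' h2' (abs_nonneg _) (by positivity)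
      linarith [neg_abs_le ((b j - y j) * (w j - y j))]
    have := Finset.sum_le_sum hterm
    rw [hD, ← Finset.sum_neg_distrib] at *
    simpa using this
  rw [split] at viw
  linarith


/-- Mirror version: with a sufficiently positive own bid, the cleared quantity is nonnegative. -/
lemma exists_nonneg (hF : ∀ l, 0 ≤ F l) (P : (Fin I → ℝ) → (Fin I → ℝ))
    (hP : ∀ b, IsProj I L ptdf F b (P b)) (i : Fin I) (b : Fin I → ℝ)
    {w : Fin I → ℝ} (hw : w ∈ Ysh I L ptdf F) (hwi : w i < 0) :
    ∃ t : ℝ, 0 ≤ t ∧ 0 ≤ P (Function.update b i t) i := by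
  set P' : (Fin I → ℝ) → (Fin I → ℝ) := fun v => fun j => -(P (fun k => -v k) j) with hP'def
  have hP' : ∀ v, IsProj I L ptdf F v (P' v) := by
    intro v
    obtain ⟨hmem, hmin⟩ := hP (fun k => -v k)
    constructor
    · exact neg_mem hmem
    · intro z hz
      have hle := hmin _ (neg_mem hz)
      have e1 : ∑ j, (v j - P' v j) ^ 2
          = ∑ j, ((fun k => -v k) j - P (fun k => -v k) j) ^ 2 :=
        Finset.sum_congr rfl fun j _ => by
          show (v j - -(P (fun k => -v k) j)) ^ 2 = (-v j - P (fun k => -v k) j) ^ 2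
          ring
      have e2 : ∑ j, ((fun k => -v k) j - (fun j => -z j) j) ^ 2
          = ∑ j, (v j - z j) ^ 2 :=
        Finset.sum_congr rfl fun j _ => by
          show (-v j - -z j) ^ 2 = (v j - z j) ^ 2
          ring
      rw [e1, ← e2]
      exact hle
  obtain ⟨t, ht0, hle⟩ := exists_nonpos hF P' hP' i (fun k => -b k) hw hwi
  have e : (fun k => -(Function.update (fun k => -b k) i t k)) = Function.update b i (-t) := by
    funext k
    rcases eq_or_ne k i with rfl | h
    · simp
    · simp [Function.update_of_ne h]
  refine ⟨-t, by linarith, ?_⟩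
  have : -(P (fun k => -(Function.update (fun k => -b k) i t k)) i) ≤ 0 := hle
  rw [e] at this
  linarith

/-- The cleared quantity is a `1`-Lipschitz function of prosumer `i`'s own bid. -/
lemma lip (P : (Fin I → ℝ) → (Fin I → ℝ))
    (hP : ∀ b, IsProj I L ptdf F b (P b)) (i : Fin I) (b : Fin I → ℝ) (s u : ℝ) :
    |P (Function.update b i s) i - P (Function.update b i u) i| ≤ |s - u| := by
  set bs := Function.update b i s with hbs
  set bu := Function.update b i u with hbu
  set ys := P bs with hys
  set yu := P bu with hyu
  have v1 := vi (hP bs) (hP bu).1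
  have v2 := vi (hP bu) (hP bs).1
  have e1 : ∀ j : Fin I, (ys j - yu j) ^ 2
      = (bs j - ys j) * (yu j - ys j) + (bu j - yu j) * (ys j - yu j)
        + (bs j - bu j) * (ys j - yu j) := fun j => by ring
  have e2 : ∑ j, (bs j - bu j) * (ys j - yu j) = (s - u) * (ys i - yu i) := by
    rw [← Finset.add_sum_erase _ _ (Finset.mem_univ i)]
    have hz : ∀ j ∈ Finset.univ.erase i, (bs j - bu j) * (ys j - yu j) = 0 := by
      intro j hj
      rw [hbs, hbu, Function.update_of_ne (Finset.ne_of_mem_erase hj),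
        Function.update_of_ne (Finset.ne_of_mem_erase hj)]
      ring
    rw [Finset.sum_eq_zero hz, add_zero, hbs, hbu, Function.update_self,
      Function.update_self]
  have key : ∑ j, (ys j - yu j) ^ 2 ≤ (s - u) * (ys i - yu i) := by
    have hsum := Finset.sum_congr rfl fun j (_ : j ∈ Finset.univ) => e1 j
    rw [hsum, Finset.sum_add_distrib, Finset.sum_add_distrib, e2]
    linarith [v1, v2]
  have single : (ys i - yu i) ^ 2 ≤ ∑ j, (ys j - yu j) ^ 2 :=
    Finset.single_le_sum (fun k _ => sq_nonneg (ys k - yu k)) (Finset.mem_univ i)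
  set d := ys i - yu i with hd
  rcases eq_or_ne d 0 with h0 | h0
  · rw [h0, abs_zero]
    exact abs_nonneg _
  · have h1 : d ^ 2 ≤ |s - u| * |d| := by
      calc d ^ 2 ≤ (s - u) * d := le_trans single key
        _ ≤ |(s - u) * d| := le_abs_self _
        _ = |s - u| * |d| := abs_mul _ _
    have h2 : |d| * |d| ≤ |s - u| * |d| := by
      rw [← sq_abs] at h1
      nlinarith [h1]
    exact le_of_mul_le_mul_right h2 (abs_pos.mpr h0)

end Stmt4Aux

theorem stmt_4 (I L : ℕ) (hI : 2 ≤ I)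
    (ptdf : Fin I → Fin L → ℝ) (F : Fin L → ℝ) (hF : ∀ l, 0 ≤ F l)
    (P : (Fin I → ℝ) → (Fin I → ℝ)) (hP : ∀ b, IsProj I L ptdf F b (P b))
    (i : Fin I) (b : Fin I → ℝ) :
    ∃ bi : ℝ, P (Function.update b i bi) i = 0 := by
  by_cases hzero : ∀ z ∈ Ysh I L ptdf F, z i = 0
  · exact ⟨b i, hzero _ (hP (Function.update b i (b i))).1⟩
  · push_neg at hzero
    obtain ⟨z, hz, hzi⟩ := hzero
    obtain ⟨w, hw, hwi⟩ : ∃ w ∈ Ysh I L ptdf F, w i < 0 := by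
      rcases lt_or_gt_of_ne hzi with h | h
      · exact ⟨z, hz, h⟩
      · exact ⟨fun j => -z j, Stmt4Aux.neg_mem hz, by simpa using h⟩
    obtain ⟨t₁, ht₁0, hg1⟩ := Stmt4Aux.exists_nonpos hF P hP i b hw hwi
    obtain ⟨t₂, ht₂0, hg2⟩ := Stmt4Aux.exists_nonneg hF P hP i b hw hwi
    set g : ℝ → ℝ := fun t => P (Function.update b i t) i with hg
    have hlip : LipschitzWith 1 g := by
      apply LipschitzWith.of_dist_le_mul
      intro x y
      rw [Real.dist_eq, Real.dist_eq, NNReal.coe_one, one_mul]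
      exact Stmt4Aux.lip P hP i b x y
    have h12 : t₁ ≤ t₂ := le_trans ht₁0 ht₂0
    have hmem : (0:ℝ) ∈ g '' Set.Icc t₁ t₂ :=
      intermediate_value_Icc h12 hlip.continuous.continuousOn ⟨hg1, hg2⟩
    obtain ⟨t, _, ht⟩ := hmem
    exact ⟨t, ht⟩
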